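/- Exactly inverting the estimated propensity is suboptimal for the bias–variance objective: setting φ₀ = λβ*β̂/(λ(β*)² + π²), one has T(φ₀, β*) < T(β̂/β*, β*); that is, the choice φ = β̂/β*, which makes (π/β̂)φ equal the exact propensity score π/β*, does not minimize φ ↦ λ(β*φ/β̂ − 1)² + (π²/β̂²)φ² when π > 0. -/

import Mathlib

/-- The bias-variance objective `T(φ, β) = λ(βφ/β̂ − 1)² + (π²/β̂²)φ²`. -/
noncomputable def T (lam bhat pi : ℝ) (φ β : ℝ) : ℝ :=
  lam * (β * φ / bhat - 1) ^ 2 + pi ^ 2 / bhat ^ 2 * φ ^ 2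

/-- Exactly inverting the estimated propensity is suboptimal for the bias–variance
objective: with `φ₀ = λβ*β̂/(λ(β*)² + π²)`, one has `T(φ₀, β*) < T(β̂/β*, β*)` whenever
`π > 0`; that is, the choice `φ = β̂/β*`, which turns `(π/β̂)φ` into the exact propensity
score `π/β*`, does not minimize `φ ↦ T(φ, β*)`. -/
theorem stmt_18 (lam bhat βstar pi : ℝ) (hlam : 0 < lam) (hbhat : 0 < bhat)
    (hβstar : 0 < βstar) (hpi : 0 < pi) :
    T lam bhat pi (lam * βstar * bhat / (lam * βstar ^ 2 + pi ^ 2)) βstar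
      < T lam bhat pi (bhat / βstar) βstar := by
  unfold T
  have hd : 0 < lam * βstar ^ 2 + pi ^ 2 := by positivity
  have h1 : βstar * (bhat / βstar) / bhat - 1 = 0 := by field_simp; ring
  have h2 : βstar * (lam * βstar * bhat / (lam * βstar ^ 2 + pi ^ 2)) / bhat - 1
      = -(pi ^ 2) / (lam * βstar ^ 2 + pi ^ 2) := by field_simp; ring
  rw [h1, h2]
  have e1 : lam * (-(pi ^ 2) / (lam * βstar ^ 2 + pi ^ 2)) ^ 2
      + pi ^ 2 / bhat ^ 2 * (lam * βstar * bhat / (lam * βstar ^ 2 + pi ^ 2)) ^ 2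
      = lam * pi ^ 2 / (lam * βstar ^ 2 + pi ^ 2) := by
    field_simp
    ring
  have e2 : lam * (0:ℝ) ^ 2 + pi ^ 2 / bhat ^ 2 * (bhat / βstar) ^ 2
      = pi ^ 2 / βstar ^ 2 := by
    field_simp
    ring
  rw [e1, e2, div_lt_div_iff₀ hd (by positivity)]
  nlinarith [mul_pos (mul_pos hpi hpi) (mul_pos hpi hpi), sq_nonneg pi]
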